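/- arXiv:2205.10917 — 7 statements merged into one kernel-verified Lean document; each statement's English description precedes it below -/
import Mathlib

section
/- For any small category C, the category-of-elements functor ∫_C : (Cᵒᵖ ⥤ Set) ⥤ Cat, sending a presheaf X to its category of elements ∫_C X, is left adjoint to the C-nerve functor ν_C : Cat ⥤ (Cᵒᵖ ⥤ Set) defined on objects by ν_C(A)(c) = the set of functors from the slice category C/c to A, with contravariant action on h : d → c given by precomposition with the post-composition functor C/h : C/d → C/c. -/
open CategoryTheory Opposite Limits

universe u

namespace HS

variable {C : Type u} [SmallCategory C]

/-- The (paper-style) category of elements of a presheaf `X`, fibered over `C`: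
objects are pairs `(c, x)` with `x ∈ X(c)`; a morphism `(d, y) ⟶ (c, x)` is a
morphism `g : d ⟶ c` of `C` with `X(g)(x) = y`. -/
@[ext]
structure Elts (X : Cᵒᵖ ⥤ Type u) : Type u where
  base : C
  elt : X.obj (op base)

instance (X : Cᵒᵖ ⥤ Type u) : Category.{u} (Elts X) where
  Hom a b := { g : a.base ⟶ b.base // X.map g.op b.elt = a.elt }
  id a := ⟨𝟙 a.base, by simp⟩
  comp {a b c} f g := ⟨f.1 ≫ g.1, by
    rw [op_comp, X.map_comp, types_comp_apply, g.2, f.2]⟩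

/-- The projection `∫X ⥤ C`. -/
def proj (X : Cᵒᵖ ⥤ Type u) : Elts X ⥤ C where
  obj a := a.base
  map f := f.1

/-- The functor `∫Y ⥤ ∫X` induced by a map of presheaves `f : Y ⟶ X`. -/
def eltsMap {Y X : Cᵒᵖ ⥤ Type u} (f : Y ⟶ X) : Elts Y ⥤ Elts X where
  obj a := ⟨a.base, f.app _ a.elt⟩
  map {a b} g := ⟨g.1, by
    rw [← FunctorToTypes.naturality, g.2]⟩

/-- The category-of-elements functor `∫ : (Cᵒᵖ ⥤ Set) ⥤ Cat`. -/
def elementsFunctor (C : Type u) [SmallCategory C] : (Cᵒᵖ ⥤ Type u) ⥤ Cat.{u, u} where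
  obj X := Cat.of (Elts X)
  map f := (eltsMap f).toCatHom

/-- The `C`-nerve functor `ν : Cat ⥤ (Cᵒᵖ ⥤ Set)`, with `ν(A)(c) = Fun(C/c, A)`,
acting contravariantly by precomposition with post-composition functors `C/h`. -/
def nerve (C : Type u) [SmallCategory C] : Cat.{u, u} ⥤ (Cᵒᵖ ⥤ Type u) where
  obj A :=
    { obj := fun c => Over c.unop ⥤ A
      map := fun h => TypeCat.ofHom fun P => Over.map h.unop ⋙ P
      map_id := fun c => by
        ext P
        show Over.map (𝟙 c.unop) ⋙ P = P
        rw [Over.mapId_eq]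
        rfl
      map_comp := fun h k => by
        ext P
        show Over.map (k.unop ≫ h.unop) ⋙ P = _
        rw [Over.mapComp_eq]
        rfl }
  map F := { app := fun c => TypeCat.ofHom fun P => P ⋙ F.toFunctor }

section Aux

variable {C : Type u} [SmallCategory C] {X : Cᵒᵖ ⥤ Type u} {A : Type u} [Category.{u} A]

lemma elts_hom_eq {a a' b b' : Elts X} (ha : a = a') (hb : b = b')
    (f : a ⟶ b) (f' : a' ⟶ b')
    (h : f.1 = eqToHom (congrArg Elts.base ha) ≫ f'.1 ≫ eqToHom (congrArg Elts.base hb).symm) :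
    f = eqToHom ha ≫ f' ≫ eqToHom hb.symm := by
  subst ha; subst hb
  apply Subtype.ext
  simpa using h

lemma F_map_eq (F : Elts X ⥤ A) {a a' b b' : Elts X} (ha : a = a') (hb : b = b')
    (f : a ⟶ b) (f' : a' ⟶ b')
    (h : f.1 = eqToHom (congrArg Elts.base ha) ≫ f'.1 ≫ eqToHom (congrArg Elts.base hb).symm) :
    F.map f = eqToHom (congrArg F.obj ha) ≫ F.map f' ≫ eqToHom (congrArg F.obj hb).symm := by
  rw [elts_hom_eq ha hb f f' h, F.map_comp, F.map_comp, eqToHom_map, eqToHom_map]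

/-- One direction of the hom equivalence: a functor `∫X ⥤ A` gives, for each
`x ∈ X(c)`, a functor `C/c ⥤ A`. -/
def toNerveApp (F : Elts X ⥤ A) (c : Cᵒᵖ) (x : X.obj c) : Over c.unop ⥤ A where
  obj f := F.obj ⟨f.left, X.map f.hom.op x⟩
  map {f g} k := F.map ⟨k.left, by
    rw [← FunctorToTypes.map_comp_apply, ← op_comp, Over.w k]⟩
  map_id f := by
    show F.map _ = 𝟙 (F.obj (⟨f.left, X.map f.hom.op x⟩ : Elts X))
    rw [← F.map_id]
    congr 1
  map_comp {f g h} k l := by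
    show F.map _ = F.map _ ≫ F.map _
    rw [← F.map_comp]
    congr 1

lemma toNerveApp_naturality (F : Elts X ⥤ A) {c d : Cᵒᵖ} (h : c ⟶ d) (x : X.obj c) :
    toNerveApp F d (X.map h x) = Over.map h.unop ⋙ toNerveApp F c x := by
  fapply CategoryTheory.Functor.ext
  · intro f
    show F.obj ⟨f.left, X.map f.hom.op (X.map h x)⟩ = F.obj ⟨f.left, X.map (f.hom ≫ h.unop).op x⟩
    congr 1
    apply congrArg (Elts.mk f.left)
    rw [← FunctorToTypes.map_comp_apply]; rfl
  · intro f g k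
    have ha : (⟨f.left, X.map f.hom.op (X.map h x)⟩ : Elts X) =
        ⟨f.left, X.map (f.hom ≫ h.unop).op x⟩ :=
      congrArg (Elts.mk f.left) (by rw [← FunctorToTypes.map_comp_apply]; rfl)
    have hb : (⟨g.left, X.map g.hom.op (X.map h x)⟩ : Elts X) =
        ⟨g.left, X.map (g.hom ≫ h.unop).op x⟩ :=
      congrArg (Elts.mk g.left) (by rw [← FunctorToTypes.map_comp_apply]; rfl)
    exact F_map_eq F ha hb _ _ (by simp)

section FromNerve

variable {B : Cat.{u, u}}

/-- `α.app c x`, seen as a functor. -/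
def nv (α : X ⟶ (nerve C).obj B) (c : Cᵒᵖ) (x : X.obj c) : Over c.unop ⥤ B := α.app c x

lemma key (α : X ⟶ (nerve C).obj B) {c d : C} (g : d ⟶ c) (x : X.obj (op c)) :
    nv α (op d) (X.map g.op x) = Over.map g ⋙ (nv α (op c) x) :=
  NatTrans.naturality_apply α g.op x

lemma keyElts (α : X ⟶ (nerve C).obj B) {a b : Elts X} (g : a ⟶ b) :
    nv α (op a.base) a.elt = Over.map g.1 ⋙ (nv α (op b.base) b.elt) := by
  conv_lhs => rw [← g.2]
  exact key α g.1 b.elt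

lemma over_map_mk {x y z : C} (f : x ⟶ y) (g : y ⟶ z) :
    (Over.map g).obj (Over.mk f) = Over.mk (f ≫ g) := rfl

lemma objEq (α : X ⟶ (nerve C).obj B) {a b : Elts X} (g : a ⟶ b) :
    (nv α (op a.base) a.elt).obj (Over.mk (𝟙 a.base)) =
      (nv α (op b.base) b.elt).obj (Over.mk g.1) := by
  rw [keyElts α g]
  show (nv α (op b.base) b.elt).obj ((Over.map g.1).obj (Over.mk (𝟙 a.base))) = _
  rw [over_map_mk, Category.id_comp]

/-- The other direction of the hom equivalence. -/
def fromNerve (α : X ⟶ (nerve C).obj B) : Elts X ⥤ B where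
  obj a := (nv α (op a.base) a.elt).obj (Over.mk (𝟙 a.base))
  map {a b} g := eqToHom (objEq α g) ≫ (nv α (op b.base) b.elt).map
    (Over.homMk g.1 : Over.mk g.1 ⟶ Over.mk (𝟙 b.base))
  map_id a := by
    have h1 : (Over.homMk (𝟙 a.base) : Over.mk (𝟙 a.base) ⟶ Over.mk (𝟙 a.base)) = 𝟙 _ :=
      Over.OverMorphism.ext rfl
    show eqToHom (objEq α (𝟙 a)) ≫ (nv α (op a.base) a.elt).map
      (Over.homMk (𝟙 a.base) : Over.mk (𝟙 a.base) ⟶ Over.mk (𝟙 a.base)) = 𝟙 _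
    rw [h1]
    simp only [eqToHom_refl, Category.id_comp]
    exact CategoryTheory.Functor.map_id _ _
  map_comp {a b c} f g := by
    have hPb := keyElts α g
    have hm := Functor.congr_hom hPb (Over.homMk f.1 : Over.mk f.1 ⟶ Over.mk (𝟙 b.base))
    have uv : (Over.map g.1).obj (Over.mk (𝟙 b.base)) = Over.mk g.1 := by
      rw [over_map_mk, Category.id_comp]
    have hover : (Over.map g.1).map (Over.homMk f.1 : Over.mk f.1 ⟶ Over.mk (𝟙 b.base)) ≫
        eqToHom uv ≫ (Over.homMk g.1 : Over.mk g.1 ⟶ Over.mk (𝟙 c.base)) =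
        eqToHom (over_map_mk f.1 g.1) ≫
          (Over.homMk (f.1 ≫ g.1) : Over.mk (f.1 ≫ g.1) ⟶ Over.mk (𝟙 c.base)) := by
      apply Over.OverMorphism.ext
      simp
    show eqToHom (objEq α (f ≫ g)) ≫ (nv α (op c.base) c.elt).map
        (Over.homMk (f.1 ≫ g.1) : Over.mk (f.1 ≫ g.1) ⟶ Over.mk (𝟙 c.base)) =
      (eqToHom (objEq α f) ≫ (nv α (op b.base) b.elt).map
        (Over.homMk f.1 : Over.mk f.1 ⟶ Over.mk (𝟙 b.base))) ≫
      (eqToHom (objEq α g) ≫ (nv α (op c.base) c.elt).map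
        (Over.homMk g.1 : Over.mk g.1 ⟶ Over.mk (𝟙 c.base)))
    rw [hm]
    simp only [Category.assoc, CategoryTheory.Functor.comp_map, eqToHom_trans_assoc]
    rw [← eqToHom_map (nv α (op c.base) c.elt) uv]
    rw [← CategoryTheory.Functor.map_comp, ← CategoryTheory.Functor.map_comp, hover,
      CategoryTheory.Functor.map_comp, eqToHom_map, eqToHom_trans_assoc]

/-- The unit direction, packaged as a map of presheaves. -/
def toNerve (F : Cat.of (Elts X) ⟶ B) : X ⟶ (nerve C).obj B where
  app c := TypeCat.ofHom fun x => toNerveApp F.toFunctor c x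
  naturality c d h := by
    ext x
    exact toNerveApp_naturality F.toFunctor h x

lemma from_to (F : Cat.of (Elts X) ⟶ B) : fromNerve (toNerve F) = F.toFunctor := by
  fapply CategoryTheory.Functor.ext
  · intro a
    exact congrArg F.toFunctor.obj (congrArg (Elts.mk a.base) (by simp))
  · intro a b g
    have ha : (⟨a.base, X.map g.1.op b.elt⟩ : Elts X) = a := congrArg (Elts.mk a.base) g.2
    have hb : (⟨b.base, X.map (𝟙 b.base).op b.elt⟩ : Elts X) = b :=
      congrArg (Elts.mk b.base) (by simp)
    show eqToHom (objEq (toNerve F) g) ≫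
        F.toFunctor.map (show (⟨a.base, X.map g.1.op b.elt⟩ : Elts X) ⟶
          ⟨b.base, X.map (𝟙 b.base).op b.elt⟩ from ⟨g.1, by simp⟩) =
      eqToHom _ ≫ F.toFunctor.map g ≫ eqToHom _
    rw [F_map_eq F.toFunctor ha hb _ g (by simp)]
    simp only [eqToHom_trans_assoc, Category.assoc]
    exact eqToHom_trans_assoc _ _ _

lemma to_from (α : X ⟶ (nerve C).obj B) : toNerve (fromNerve α).toCatHom = α := by
  apply NatTrans.ext
  funext c
  ext x
  show toNerveApp (fromNerve α) c x = nv α c x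
  fapply CategoryTheory.Functor.ext
  · intro f
    show (nv α (op f.left) (X.map f.hom.op x)).obj (Over.mk (𝟙 f.left)) =
      (nv α c x).obj f
    rw [show nv α (op f.left) (X.map f.hom.op x) = Over.map f.hom ⋙ (nv α c x) from
      key α f.hom x]
    show (nv α c x).obj ((Over.map f.hom).obj (Over.mk (𝟙 f.left))) = _
    rw [over_map_mk, Category.id_comp]
    exact congrArg _ (CostructuredArrow.eq_mk f).symm
  · intro f g k
    have hk := Functor.congr_hom (show nv α (op g.left) (X.map g.hom.op x) =
        Over.map g.hom ⋙ (nv α c x) from key α g.hom x)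
      (Over.homMk k.left : Over.mk k.left ⟶ Over.mk (𝟙 g.left))
    have e1 : (Over.map g.hom).obj (Over.mk k.left) = f := by
      rw [over_map_mk, Over.w k]
      exact (CostructuredArrow.eq_mk f).symm
    have e2 : g = (Over.map g.hom).obj (Over.mk (𝟙 g.left)) := by
      rw [over_map_mk, Category.id_comp]
      exact CostructuredArrow.eq_mk g
    have hover : (Over.map g.hom).map (Over.homMk k.left : Over.mk k.left ⟶ Over.mk (𝟙 g.left)) =
        eqToHom e1 ≫ k ≫ eqToHom e2 := by
      apply Over.OverMorphism.ext
      simp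
    show eqToHom (objEq α (show (⟨f.left, X.map f.hom.op x⟩ : Elts X) ⟶
          ⟨g.left, X.map g.hom.op x⟩ from ⟨k.left, by
            rw [← FunctorToTypes.map_comp_apply, ← op_comp, Over.w k]⟩)) ≫
        (nv α (op g.left) (X.map g.hom.op x)).map
          (Over.homMk k.left : Over.mk k.left ⟶ Over.mk (𝟙 g.left)) =
      eqToHom _ ≫ (nv α c x).map k ≫ eqToHom _
    rw [hk]
    simp only [CategoryTheory.Functor.comp_map]
    rw [hover]
    simp only [CategoryTheory.Functor.map_comp, eqToHom_map, eqToHom_trans_assoc,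
      Category.assoc, eqToHom_trans]

end FromNerve

end Aux

/-- For any small category `C`, the category-of-elements functor
`∫_C : (Cᵒᵖ ⥤ Set) ⥤ Cat` is left adjoint to the `C`-nerve functor
`ν_C : Cat ⥤ (Cᵒᵖ ⥤ Set)`. -/
theorem elementsFunctor_adjunction_nerve (C : Type u) [SmallCategory C] :
    Nonempty (elementsFunctor C ⊣ nerve C) := by
  refine ⟨Adjunction.mkOfHomEquiv
    { homEquiv := fun X B =>
        { toFun := toNerve
          invFun := fun α => (fromNerve α).toCatHom
          left_inv := fun F => Cat.ext (from_to F)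
          right_inv := to_from }
      homEquiv_naturality_left_symm := fun f g => rfl
      homEquiv_naturality_right := fun f g => rfl }⟩

end HS
end

section
/- For any small category C, the category-of-elements functor ∫_C : (Cᵒᵖ ⥤ Set) ⥤ Cat preserves all small colimits. -/
open CategoryTheory Opposite Limits

universe u

namespace HS

variable {C : Type u} [SmallCategory C]

section Adj

variable {X Y : Cᵒᵖ ⥤ Type u} {D E : Cat.{u, u}}

theorem eltsMap_id (X : Cᵒᵖ ⥤ Type u) : eltsMap (𝟙 X) = 𝟭 (Elts X) := rfl

theorem eltsMap_comp {Z : Cᵒᵖ ⥤ Type u} (f : Z ⟶ Y) (g : Y ⟶ X) :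
    eltsMap (f ≫ g) = eltsMap f ⋙ eltsMap g := rfl

theorem elts_mk_eq {c : C} {x y : X.obj (op c)} (h : x = y) :
    (⟨c, x⟩ : Elts X) = ⟨c, y⟩ := by rw [h]

@[simp] theorem elts_id_val (a : Elts X) : (𝟙 a : a ⟶ a).1 = 𝟙 a.base := rfl

@[simp] theorem elts_comp_val {a b c : Elts X} (f : a ⟶ b) (g : b ⟶ c) :
    (f ≫ g).1 = f.1 ≫ g.1 := rfl

/-- Images of morphisms of `Elts X` with propositionally equal endpoints and equal
underlying `C`-morphisms under propositionally equal functors are heterogeneously equal. -/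
theorem fmap_heq {D : Type*} [Category D] {F G : Elts X ⥤ D} (hFG : F = G) {c d : C}
    {x x' : X.obj (op c)} {y y' : X.obj (op d)} (hx : x = x') (hy : y = y')
    (f : (⟨c, x⟩ : Elts X) ⟶ ⟨d, y⟩) (f' : (⟨c, x'⟩ : Elts X) ⟶ ⟨d, y'⟩)
    (hf : f.1 = f'.1) : HEq (F.map f) (G.map f') := by
  subst hFG; subst hx; subst hy
  rw [Subtype.ext hf]

/-- The tautological map `yoneda.obj c ⟶ X` associated to `x : X.obj c`. -/
def reprHom {c : Cᵒᵖ} (x : X.obj c) : yoneda.obj c.unop ⟶ X where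
  app d := TypeCat.ofHom (fun g => X.map g.op x)
  naturality d d' h := by
    ext g
    show X.map (h.unop ≫ g).op x = X.map h (X.map g.op x)
    rw [op_comp, Quiver.Hom.op_unop, FunctorToTypes.map_comp_apply]

theorem reprHom_nat {c c' : Cᵒᵖ} (h : c ⟶ c') (x : X.obj c) :
    reprHom (X.map h x) = yoneda.map h.unop ≫ reprHom x := by
  apply NatTrans.ext
  funext d; ext g
  show X.map g.op (X.map h x) = X.map (g ≫ h.unop).op x
  rw [op_comp, Quiver.Hom.op_unop, FunctorToTypes.map_comp_apply]

/-- The right adjoint to the category-of-elements functor. -/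
def rAdj (C : Type u) [SmallCategory C] : Cat.{u, u} ⥤ (Cᵒᵖ ⥤ Type u) where
  obj D :=
    { obj := fun c => Elts (yoneda.obj c.unop) ⥤ D
      map := fun h => TypeCat.ofHom (fun G => eltsMap (yoneda.map h.unop) ⋙ G)
      map_id := by
        intro c
        ext G
        show eltsMap (yoneda.map (𝟙 c.unop)) ⋙ G = G
        rw [CategoryTheory.Functor.map_id, eltsMap_id]
        rfl
      map_comp := by
        intro a b c f g
        ext G
        show eltsMap (yoneda.map (g.unop ≫ f.unop)) ⋙ G = _
        rw [Functor.map_comp, eltsMap_comp]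
        rfl }
  map F := { app := fun c => TypeCat.ofHom (fun G => G ⋙ F.toFunctor) }

/-- One direction of the hom equivalence. -/
def homEquivFwd (F : Elts X ⥤ D) : X ⟶ (rAdj C).obj D where
  app c := TypeCat.ofHom (fun x => eltsMap (reprHom x) ⋙ F)
  naturality c c' h := by
    ext x
    show eltsMap (reprHom (X.map h x)) ⋙ F =
      eltsMap (yoneda.map h.unop) ⋙ (eltsMap (reprHom x) ⋙ F)
    rw [reprHom_nat, eltsMap_comp]
    rfl

theorem rAdj_key (α : X ⟶ (rAdj C).obj D) {d : C} {c : Cᵒᵖ} (g : d ⟶ c.unop) (x : X.obj c) :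
    α.app (op d) (X.map g.op x) = eltsMap (yoneda.map g) ⋙ α.app c x :=
  NatTrans.naturality_apply α g.op x

theorem rAdj_key' (α : X ⟶ (rAdj C).obj D) {a b : Elts X} (g : a ⟶ b) :
    α.app (op a.base) a.elt = eltsMap (yoneda.map g.1) ⋙ α.app (op b.base) b.elt := by
  conv_lhs => rw [← g.2]
  exact rAdj_key α g.1 b.elt

/-- The canonical slice-category morphism associated to a morphism of `Elts X`. -/
def invMap {a b : Elts X} (g : a ⟶ b) :
    (⟨a.base, 𝟙 a.base ≫ g.1⟩ : Elts (yoneda.obj b.base)) ⟶ ⟨b.base, 𝟙 b.base⟩ :=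
  ⟨g.1, by show g.1 ≫ 𝟙 b.base = 𝟙 a.base ≫ g.1; simp⟩

theorem invObjEq (α : X ⟶ (rAdj C).obj D) {a b : Elts X} (g : a ⟶ b) :
    (α.app (op a.base) a.elt).obj ⟨a.base, 𝟙 a.base⟩ =
      (α.app (op b.base) b.elt).obj ⟨a.base, 𝟙 a.base ≫ g.1⟩ :=
  congrArg (fun (G : Elts (yoneda.obj a.base) ⥤ D) => G.obj ⟨a.base, 𝟙 a.base⟩)
    (rAdj_key' α g)

/-- The other direction of the hom equivalence. -/
def invFunAux (α : X ⟶ (rAdj C).obj D) : Elts X ⥤ D where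
  obj a := (α.app (op a.base) a.elt).obj ⟨a.base, 𝟙 a.base⟩
  map {a b} g := eqToHom (invObjEq α g) ≫ (α.app (op b.base) b.elt).map (invMap g)
  map_id a := by
    apply eq_of_heq
    refine (eqToHom_comp_heq _ _).trans ?_
    rw [← (α.app (op a.base) a.elt).map_id]
    exact fmap_heq rfl (by simp) rfl (invMap (𝟙 a)) (𝟙 _) rfl
  map_comp {a b c} f g := by
    apply eq_of_heq
    simp only [Category.assoc]
    refine (eqToHom_comp_heq _ _).trans (HEq.trans ?_ (eqToHom_comp_heq _ _).symm)
    refine HEq.trans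
      (b := (α.app (op c.base) c.elt).map
          ((eltsMap (yoneda.map g.1)).map (invMap f) ≫ invMap g)) ?_ ?_
    · exact fmap_heq rfl (by simp) rfl (invMap (f ≫ g)) _ rfl
    · refine (heq_of_eq (Functor.map_comp _ _ _)).trans ?_
      refine heq_comp
        (congrArg (fun (G : Elts (yoneda.obj b.base) ⥤ D) =>
            G.obj ⟨a.base, 𝟙 a.base ≫ f.1⟩) (rAdj_key' α g)).symm
        (invObjEq α g).symm rfl
        (Functor.hcongr_hom (rAdj_key' α g) (invMap f)).symm
        (eqToHom_comp_heq _ _).symm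

theorem invFun_toFun (F : Elts X ⥤ D) : invFunAux (homEquivFwd F) = F := by
  apply Functor.hext
  · intro a
    show F.obj ⟨a.base, X.map (𝟙 a.base).op a.elt⟩ = F.obj a
    exact congrArg F.obj (elts_mk_eq (by simp) :
      (⟨a.base, X.map (𝟙 a.base).op a.elt⟩ : Elts X) = ⟨a.base, a.elt⟩)
  · intro a b g
    show HEq (eqToHom _ ≫ F.map ((eltsMap (reprHom b.elt)).map (invMap g))) (F.map g)
    refine (eqToHom_comp_heq _ _).trans ?_
    refine fmap_heq (F := F) rfl
      (show X.map (𝟙 a.base ≫ g.1).op b.elt = a.elt by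
        rw [Category.id_comp]; exact g.2)
      (show X.map (𝟙 b.base).op b.elt = b.elt by simp) _
      (show (⟨a.base, a.elt⟩ : Elts X) ⟶ ⟨b.base, b.elt⟩ from g) rfl

theorem toFun_invFun (α : X ⟶ (rAdj C).obj D) : homEquivFwd (invFunAux α) = α := by
  apply NatTrans.ext
  funext c; ext x
  show eltsMap (reprHom x) ⋙ invFunAux α = α.app c x
  apply Functor.hext
  · intro a
    show (α.app (op a.base) (X.map a.elt.op x)).obj ⟨a.base, 𝟙 a.base⟩ = (α.app c x).obj a
    rw [rAdj_key α a.elt x]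
    exact congrArg (α.app c x).obj (elts_mk_eq (by simp) :
      (⟨a.base, 𝟙 a.base ≫ a.elt⟩ : Elts (yoneda.obj c.unop)) = ⟨a.base, a.elt⟩)
  · intro a b g
    show HEq (eqToHom _ ≫
        (α.app (op b.base) (X.map b.elt.op x)).map (invMap ((eltsMap (reprHom x)).map g)))
      ((α.app c x).map g)
    refine (eqToHom_comp_heq _ _).trans ?_
    refine (Functor.hcongr_hom (rAdj_key α b.elt x)
      (invMap ((eltsMap (reprHom x)).map g))).trans ?_
    refine fmap_heq (F := α.app c x) rfl
      (show (𝟙 a.base ≫ g.1) ≫ b.elt = a.elt by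
        rw [Category.id_comp]; exact g.2)
      (show 𝟙 b.base ≫ b.elt = b.elt by simp) _
      (show (⟨a.base, a.elt⟩ : Elts (yoneda.obj c.unop)) ⟶ ⟨b.base, b.elt⟩ from g) rfl

end Adj

/-- The category-of-elements functor is left adjoint to `rAdj`. -/
def eltsAdj (C : Type u) [SmallCategory C] : elementsFunctor C ⊣ rAdj C :=
  Adjunction.mkOfHomEquiv
    { homEquiv := fun X D =>
        { toFun := fun F => homEquivFwd F.toFunctor
          invFun := fun α => (invFunAux α).toCatHom
          left_inv := fun F => congrArg Functor.toCatHom (invFun_toFun F.toFunctor)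
          right_inv := fun α => toFun_invFun α }
      homEquiv_naturality_left_symm := fun f α => rfl
      homEquiv_naturality_right := fun F u => rfl }

/-- For any small category `C`, the category-of-elements functor
`∫_C : (Cᵒᵖ ⥤ Set) ⥤ Cat` preserves all small colimits. -/
theorem elementsFunctor_preservesColimits (C : Type u) [SmallCategory C] :
    Nonempty (Limits.PreservesColimitsOfSize.{u, u} (elementsFunctor C)) :=
  ⟨(eltsAdj C).leftAdjoint_preservesColimits⟩

end HS
end

section
/- For any small category D, the colimit in Cat of the functor D ⥤ Cat sending each object d to the slice category D/d, and each morphism h : d → d' to the post-composition functor D/h : D/d → D/d', is isomorphic to D itself. -/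
open CategoryTheory Opposite Limits

universe u

namespace SliceColimAux

variable {D : Type u} [SmallCategory D]

/-- The leg of a cocone, as a functor out of `Over d`. -/
def leg (s : Cocone (Over.mapFunctor D)) (d : D) : Over d ⥤ s.pt := (s.ι.app d).toFunctor

lemma opApp (s : Cocone (Over.mapFunctor D)) {d d' : D} (f : d ⟶ d') :
    Over.map f ⋙ (leg s d') = (leg s d) := by
  exact congrArg Cat.Hom.toFunctor ((s.ι.naturality f).trans (Category.comp_id _))

lemma objEq (s : Cocone (Over.mapFunctor D)) {d d' : D} (f : d ⟶ d') :
    (leg s d).obj (Over.mk (𝟙 d)) = (leg s d').obj (Over.mk f) := by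
  conv_lhs => rw [← opApp s f]
  show (leg s d').obj (Over.mk (𝟙 d ≫ f)) = _
  rw [Category.id_comp]

lemma homCongr {d : D} {A B A' B' : Over d} (hA : A = A') (hB : B = B')
    (u : A ⟶ B) (v : A' ⟶ B') (h : HEq u.left v.left) :
    u = eqToHom hA ≫ v ≫ eqToHom hB.symm := by
  subst hA hB; ext; simpa using eq_of_heq h

/-- The descending functor. -/
def descFun (s : Cocone (Over.mapFunctor D)) : D ⥤ s.pt where
  obj d := (leg s d).obj (Over.mk (𝟙 d))
  map {d d'} f := eqToHom (objEq s f) ≫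
    (leg s d').map (Over.homMk f : Over.mk f ⟶ Over.mk (𝟙 d'))
  map_id d := by
    show eqToHom (objEq s (𝟙 d)) ≫
      (leg s d).map (Over.homMk (𝟙 d) : Over.mk (𝟙 d) ⟶ Over.mk (𝟙 d)) = 𝟙 _
    have : (Over.homMk (𝟙 d) : Over.mk (𝟙 d) ⟶ Over.mk (𝟙 d)) = 𝟙 _ := by ext; rfl
    rw [this]; simp
  map_comp {d d' d''} f g := by
    show eqToHom (objEq s (f ≫ g)) ≫
        (leg s d'').map (Over.homMk (f ≫ g) : Over.mk (f ≫ g) ⟶ Over.mk (𝟙 d''))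
      = (eqToHom (objEq s f) ≫
          (leg s d').map (Over.homMk f : Over.mk f ⟶ Over.mk (𝟙 d'))) ≫
        (eqToHom (objEq s g) ≫
          (leg s d'').map (Over.homMk g : Over.mk g ⟶ Over.mk (𝟙 d'')))
    have h1 := Functor.congr_hom (opApp s g).symm
      (Over.homMk f : Over.mk f ⟶ Over.mk (𝟙 d'))
    rw [h1]
    have e2 : (Over.map g).obj (Over.mk (𝟙 d')) = Over.mk g := by
      show Over.mk (𝟙 d' ≫ g) = Over.mk g
      rw [Category.id_comp]
    have h2 := homCongr rfl e2 ((Over.map g).map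
        (Over.homMk f : Over.mk f ⟶ Over.mk (𝟙 d')))
      (Over.homMk f : Over.mk (f ≫ g) ⟶ Over.mk g) HEq.rfl
    rw [show ((Over.map g ⋙ (leg s d'')).map
        (Over.homMk f : Over.mk f ⟶ Over.mk (𝟙 d')))
        = (leg s d'').map ((Over.map g).map (Over.homMk f)) from rfl, h2]
    have h3 : (Over.homMk f : Over.mk (f ≫ g) ⟶ Over.mk g) ≫
        (Over.homMk g : Over.mk g ⟶ Over.mk (𝟙 d''))
        = (Over.homMk (f ≫ g) : Over.mk (f ≫ g) ⟶ Over.mk (𝟙 d'')) := by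
      ext; rfl
    simp only [Functor.map_comp, eqToHom_map, eqToHom_refl, Category.id_comp,
      Category.assoc, eqToHom_trans, eqToHom_trans_assoc, ← h3]

lemma fac (s : Cocone (Over.mapFunctor D)) (d : D) :
    Over.forget d ⋙ descFun s = (leg s d) := by
  show (Over.forget d ⋙ descFun s : Over d ⥤ s.pt) = ((leg s d) : Over d ⥤ s.pt)
  fapply CategoryTheory.Functor.ext
  · intro X
    show (leg s X.left).obj (Over.mk (𝟙 X.left)) = (leg s d).obj X
    conv_lhs => rw [← opApp s (d := X.left) (d' := d) X.hom]
    show (leg s d).obj (Over.mk (𝟙 X.left ≫ X.hom)) = _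
    rw [Category.id_comp]
    rfl
  · intro X Y u
    show eqToHom (objEq s u.left) ≫
      (leg s Y.left).map (Over.homMk u.left : Over.mk u.left ⟶ Over.mk (𝟙 Y.left)) = _
    have h1 := Functor.congr_hom (opApp s (d := Y.left) (d' := d) Y.hom).symm
      (Over.homMk u.left : Over.mk u.left ⟶ Over.mk (𝟙 Y.left))
    rw [h1]
    have e1 : (Over.map Y.hom).obj (Over.mk u.left) = X := by
      show Over.mk (u.left ≫ Y.hom) = X
      rw [Over.w u]; rfl
    have e2 : (Over.map Y.hom).obj (Over.mk (𝟙 Y.left)) = Y := by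
      show Over.mk (𝟙 Y.left ≫ Y.hom) = Y
      rw [Category.id_comp]; rfl
    have h2 := homCongr e1 e2 ((Over.map Y.hom).map
        (Over.homMk u.left : Over.mk u.left ⟶ Over.mk (𝟙 Y.left))) u HEq.rfl
    rw [show ((Over.map Y.hom ⋙ (leg s d)).map
        (Over.homMk u.left : Over.mk u.left ⟶ Over.mk (𝟙 Y.left)))
        = (leg s d).map ((Over.map Y.hom).map (Over.homMk u.left)) from rfl, h2]
    simp only [Functor.map_comp, eqToHom_map, Category.assoc, eqToHom_trans,
      eqToHom_trans_assoc]
    rfl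

lemma eqToHom_aux {C : Type*} [Category C] {A A' B E E' : C} (p : A = B) (X : B ⟶ E)
    (q : E = E') (p1 : A = A') (p2 : A' = B) (q1 : E = E') :
    eqToHom p ≫ X ≫ eqToHom q = eqToHom p1 ≫ (eqToHom p2 ≫ X) ≫ eqToHom q1 := by
  subst p1 p2 q; simp

lemma uniq (s : Cocone (Over.mapFunctor D)) (m : D ⥤ s.pt)
    (hm : ∀ d : D, (Over.forget d : Over d ⥤ D) ⋙ m = (leg s d)) :
    m = descFun s := by
  show (m : D ⥤ s.pt) = descFun s
  fapply CategoryTheory.Functor.ext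
  · intro (d : D)
    exact Functor.congr_obj (hm d) (Over.mk (𝟙 d))
  · intro (d : D) (d' : D) (f : d ⟶ d')
    have h1 := Functor.congr_hom (hm d')
      (Over.homMk f : Over.mk f ⟶ Over.mk (𝟙 d'))
    show m.map ((Over.forget d').map (Over.homMk f : Over.mk f ⟶ Over.mk (𝟙 d'))) = _
    rw [show m.map ((Over.forget d').map (Over.homMk f : Over.mk f ⟶ Over.mk (𝟙 d')))
      = ((Over.forget d' : Over d' ⥤ D) ⋙ m).map (Over.homMk f) from rfl, h1]
    show _ = _ ≫ (eqToHom (objEq s f) ≫ _) ≫ _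
    exact eqToHom_aux _ _ _ _ _ _

end SliceColimAux

/-- For any small category `D`, the colimit in `Cat` of the functor
`D ⥤ Cat` sending `d` to the slice category `D/d` (and `h : d ⟶ d'` to the
post-composition functor `D/h : D/d ⥤ D/d'`) is `D` itself: the cocone on
`Over.mapFunctor D` with apex `D`, whose legs are the forgetful functors
`D/d ⥤ D`, is a colimit cocone. -/
theorem colimit_of_slices_is_self (D : Type u) [SmallCategory D] :
    Nonempty (IsColimit (Limits.Cocone.mk (Cat.of D)
      { app := fun d => (Over.forget d : Over d ⥤ D).toCatHom
        naturality := fun d d' h => by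
          show (Over.map h ⋙ Over.forget d').toCatHom = ((Over.forget d : Over d ⥤ D) ⋙ 𝟭 D).toCatHom
          rfl } : Limits.Cocone (Over.mapFunctor D))) := by
  exact ⟨{ desc := fun s => (SliceColimAux.descFun s).toCatHom
           fac := fun s d => Cat.ext (SliceColimAux.fac s d)
           uniq := fun s m hm => Cat.ext (SliceColimAux.uniq s m.toFunctor
             (fun d => congrArg Cat.Hom.toFunctor (hm d))) }⟩
end

section
/- Let C be a small category and f : Y ⟶ X a morphism of presheaves on C. For each object c of C, let η_X(c) : X(c) → Fun(C/c, ∫X) send x to the functor taking (g : d → c) to the element (d, X(g)(x)) of ∫X, and similarly for η_Y. Then for every c, the square of sets with top map η_Y(c) : Y(c) → Fun(C/c, ∫Y), bottom map η_X(c) : X(c) → Fun(C/c, ∫X), left map f_c, and right map post-composition with ∫f : ∫Y → ∫X, commutes and is a pullback. (Equivalently: the naturality square of the unit η of the adjunction ∫ ⊣ ν at f is a pullback of presheaves.) -/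
open CategoryTheory Opposite Limits

universe u

namespace HS

variable {C : Type u} [SmallCategory C]

/-- The unit of the adjunction `∫ ⊣ ν` at a presheaf `X`, componentwise: an element
`x ∈ X(c)` is sent to the functor `C/c ⥤ ∫X` taking `g : d ⟶ c` to `(d, X(g)(x))`. -/
def etaApp (X : Cᵒᵖ ⥤ Type u) {c : C} (x : X.obj (op c)) : Over c ⥤ Elts X where
  obj g := ⟨g.left, X.map g.hom.op x⟩
  map {g g'} m := ⟨m.left, by
    rw [← types_comp_apply (X.map g'.hom.op) (X.map m.left.op), ← X.map_comp, ← op_comp,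
      Over.w m]⟩

@[simp]
lemma val_eqToHom {Z : Cᵒᵖ ⥤ Type u} {a b : Elts Z} (h : a = b) :
    (eqToHom h).1 = eqToHom (congrArg Elts.base h) := by subst h; rfl

@[simp]
lemma val_comp {Z : Cᵒᵖ ⥤ Type u} {a b c : Elts Z} (f : a ⟶ b) (g : b ⟶ c) :
    (f ≫ g).1 = f.1 ≫ g.1 := rfl

lemma Elts.ext' {Z : Cᵒᵖ ⥤ Type u} {a : Elts Z} {b : C} (h : a.base = b) (v : Z.obj (op b))
    (hv : a.elt = Z.map (eqToHom h).op v) : a = ⟨b, v⟩ := by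
  cases a
  subst h
  simp only [eqToHom_refl, op_id, CategoryTheory.Functor.map_id, types_id_apply] at hv
  subst hv
  rfl

lemma etaApp_comp_eltsMap {Y X : Cᵒᵖ ⥤ Type u} (f : Y ⟶ X) {c : C} (y : Y.obj (op c)) :
    etaApp Y y ⋙ eltsMap f = etaApp X (f.app (op c) y) := by
  refine CategoryTheory.Functor.ext (fun g => ?_) (fun g g' m => ?_)
  · dsimp [etaApp, eltsMap]
    rw [FunctorToTypes.naturality]
  · apply Subtype.ext
    simp [etaApp, eltsMap]
    erw [val_eqToHom, val_eqToHom]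
    simp

lemma etaApp_injective (Z : Cᵒᵖ ⥤ Type u) (c : C) :
    Function.Injective (fun z : Z.obj (op c) => etaApp Z z) := by
  intro y y' h
  have h2 := Functor.congr_obj h (Over.mk (𝟙 c))
  rw [Elts.ext_iff] at h2
  have h3 := eq_of_heq h2.2
  simpa [etaApp] using h3

lemma etaApp_of_proj {Z : Cᵒᵖ ⥤ Type u} {c : C} (G : Over c ⥤ Elts Z)
    (hproj : G ⋙ proj Z = Over.forget c) :
    etaApp Z (Z.map (eqToHom (Functor.congr_obj hproj (Over.mk (𝟙 c))).symm).op
      (G.obj (Over.mk (𝟙 c))).elt) = G := by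
  have hb : ∀ g : Over c, (G.obj g).base = g.left := fun g => Functor.congr_obj hproj g
  set y := Z.map (eqToHom (Functor.congr_obj hproj (Over.mk (𝟙 c))).symm).op
      (G.obj (Over.mk (𝟙 c))).elt with hy
  refine CategoryTheory.Functor.ext (fun g => ?_) (fun g g' m => ?_)
  · symm
    show G.obj g = ⟨g.left, Z.map g.hom.op y⟩
    apply Elts.ext' (hb g)
    have hm := (G.map (Over.homMk g.hom : g ⟶ Over.mk (𝟙 c))).2
    have hval : (G.map (Over.homMk g.hom : g ⟶ Over.mk (𝟙 c))).1 =
        eqToHom (hb g) ≫ g.hom ≫ eqToHom (hb (Over.mk (𝟙 c))).symm :=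
      Functor.congr_hom hproj (Over.homMk g.hom : g ⟶ Over.mk (𝟙 c))
    rw [hval] at hm
    rw [← hm, hy]
    erw [op_comp, op_comp, Functor.map_comp_apply, Functor.map_comp_apply]
    rfl
  · apply Subtype.ext
    have hval : (G.map m).1 = eqToHom (hb g) ≫ m.left ≫ eqToHom (hb g').symm :=
      Functor.congr_hom hproj m
    simp [etaApp, hval]
    erw [val_eqToHom, val_eqToHom]
    simp

/-- For a morphism of presheaves `f : Y ⟶ X` and every object `c` of `C`,
the naturality square of the unit `η` of the adjunction `∫ ⊣ ν` — with top map
`η_Y(c) : Y(c) → Fun(C/c, ∫Y)`, bottom map `η_X(c) : X(c) → Fun(C/c, ∫X)`, left map `f_c`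
and right map post-composition with `∫f : ∫Y ⥤ ∫X` — commutes and is a pullback of sets. -/
theorem eta_naturality_isPullback (C : Type u) [SmallCategory C]
    {Y X : Cᵒᵖ ⥤ Type u} (f : Y ⟶ X) (c : C) :
    IsPullback (f := TypeCat.ofHom fun G : Over c ⥤ Elts Y => G ⋙ eltsMap f)
      (g := TypeCat.ofHom fun x : X.obj (op c) => etaApp X x)
      (fst := TypeCat.ofHom fun y : Y.obj (op c) => etaApp Y y) (snd := f.app (op c)) := by
  have comm : TypeCat.ofHom (fun y : Y.obj (op c) => etaApp Y y) ≫ TypeCat.ofHom (fun G : Over c ⥤ Elts Y => G ⋙ eltsMap f)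
      = f.app (op c) ≫ TypeCat.ofHom (fun x : X.obj (op c) => etaApp X x) := by
    ext y; exact etaApp_comp_eltsMap f y
  refine IsPullback.of_isLimit (c := PullbackCone.mk _ _ comm)
    ((PullbackCone.isLimitEquivBijective _).symm ⟨?_, ?_⟩)
  · intro y y' h
    have h1 : etaApp Y y = etaApp Y y' := congrArg (fun p => p.1.1) h
    exact etaApp_injective Y c h1
  · rintro ⟨⟨G, x⟩, hp⟩
    have hp' : G ⋙ eltsMap f = etaApp X x := hp
    have h1 : (G ⋙ eltsMap f) ⋙ proj X = etaApp X x ⋙ proj X := by rw [hp']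
    have hproj : G ⋙ proj Y = Over.forget c := h1
    set y := Y.map (eqToHom (Functor.congr_obj hproj (Over.mk (𝟙 c))).symm).op
      (G.obj (Over.mk (𝟙 c))).elt with hy
    have hG : etaApp Y y = G := etaApp_of_proj G hproj
    have hx : f.app (op c) y = x := by
      apply etaApp_injective X c
      show etaApp X (f.app (op c) y) = etaApp X x
      exact (etaApp_comp_eltsMap f (c := c) y).symm.trans ((congrArg (· ⋙ eltsMap f) hG).trans hp')
    refine ⟨y, ?_⟩
    apply Subtype.ext
    ext
    · exact hG
    · exact hx

end HS
end

section
/- Let C be a small category and f : Y ⟶ X a morphism of presheaves on C. For each object c of C define: a map Y(c) → Fun(C/c, Set∙ᵒᵖ) sending y to the functor (g : d → c) ↦ the pointed set (f_d⁻¹{X(g)(f_c(y))}, Y(g)(y)); and a map X(c) → Fun(C/c, Setᵒᵖ) sending x to the functor (g : d → c) ↦ the fiber f_d⁻¹{X(g)(x)}. Then for every c, the square with these two maps as top and bottom, f_c on the left, and post-composition with the forgetful functor Set∙ᵒᵖ → Setᵒᵖ on the right, commutes and is a pullback of sets. (Equivalently: the map of presheaves 𝒱̇ = ν(Set∙ᵒᵖ)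 → 𝒱 = ν(Setᵒᵖ) classifies all natural transformations Y ⟶ X via a pullback square in presheaves.) -/
open CategoryTheory Opposite Limits

universe u

namespace HS

variable {C : Type u} [SmallCategory C]

/-- The fiber of a map of presheaves `f : Y ⟶ X` over an element `x ∈ X(d)`. -/
def fib {Y X : Cᵒᵖ ⥤ Type u} (f : Y ⟶ X) {d : C} (x : X.obj (op d)) : Type u :=
  {y : Y.obj (op d) // f.app (op d) y = x}

lemma fib_map {Y X : Cᵒᵖ ⥤ Type u} (f : Y ⟶ X) {d d' : C} (m : d ⟶ d')
    {x : X.obj (op d')} (y : fib f x) : f.app (op d) (Y.map m.op y.1) = X.map m.op x := by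
  rw [FunctorToTypes.naturality, y.2]

/-- The classifying functor `C/c ⥤ Setᵒᵖ` of a map of presheaves `f : Y ⟶ X` at an
element `x ∈ X(c)`: it sends `(g : d ⟶ c)` to the fiber `f_d⁻¹{X(g)(x)}`. -/
def classify {Y X : Cᵒᵖ ⥤ Type u} (f : Y ⟶ X) {c : C} (x : X.obj (op c)) :
    Over c ⥤ (Type u)ᵒᵖ where
  obj g := op (fib f (X.map g.hom.op x))
  map {g g'} m :=
    Quiver.Hom.op
      (show fib f (X.map g'.hom.op x) ⟶ fib f (X.map g.hom.op x) from
        TypeCat.ofHom fun y => ⟨Y.map m.left.op y.1, by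
          change f.app (op g.left) (Y.map m.left.op y.1) = X.map g.hom.op x
          rw [fib_map f m.left y, ← types_comp_apply (X.map g'.hom.op) (X.map m.left.op),
            ← X.map_comp, ← op_comp, Over.w m]⟩)
  map_id g := by
    apply Quiver.Hom.unop_inj
    ext y
    apply Subtype.ext
    change Y.map (𝟙 g.left).op y.1 = y.1
    rw [op_id, Y.map_id]
    rfl
  map_comp {g g' g''} m m' := by
    apply Quiver.Hom.unop_inj
    ext y
    apply Subtype.ext
    change Y.map (m.left ≫ m'.left).op y.1 = Y.map m.left.op (Y.map m'.left.op y.1)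
    rw [op_comp, Y.map_comp]
    rfl

/-- The pointed classifying functor `C/c ⥤ Set∙ᵒᵖ` of a map of presheaves `f : Y ⟶ X` at
an element `y ∈ Y(c)`: it sends `(g : d ⟶ c)` to the pointed set
`(f_d⁻¹{X(g)(f_c(y))}, Y(g)(y))`. -/
def classifyDot {Y X : Cᵒᵖ ⥤ Type u} (f : Y ⟶ X) {c : C} (y : Y.obj (op c)) :
    Over c ⥤ Pointed.{u}ᵒᵖ where
  obj g := op ⟨fib f (X.map g.hom.op (f.app (op c) y)),
    ⟨Y.map g.hom.op y, by rw [FunctorToTypes.naturality]⟩⟩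
  map {g g'} m :=
    Quiver.Hom.op
      (show (⟨fib f (X.map g'.hom.op (f.app (op c) y)), _⟩ : Pointed.{u}) ⟶
          ⟨fib f (X.map g.hom.op (f.app (op c) y)), _⟩ from
        ⟨fun z => ⟨Y.map m.left.op z.1, by
            change f.app (op g.left) (Y.map m.left.op z.1) = X.map g.hom.op (f.app (op c) y)
            rw [fib_map f m.left z, ← types_comp_apply (X.map g'.hom.op) (X.map m.left.op),
              ← X.map_comp, ← op_comp, Over.w m]⟩, by
          apply Subtype.ext
          change Y.map m.left.op (Y.map g'.hom.op y) = Y.map g.hom.op y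
          rw [← types_comp_apply (Y.map g'.hom.op) (Y.map m.left.op), ← Y.map_comp,
            ← op_comp, Over.w m]⟩)
  map_id g := by
    apply Quiver.Hom.unop_inj
    apply Pointed.Hom.ext
    funext z
    apply Subtype.ext
    change Y.map (𝟙 g.left).op z.1 = z.1
    rw [op_id, Y.map_id]
    rfl
  map_comp {g g' g''} m m' := by
    apply Quiver.Hom.unop_inj
    apply Pointed.Hom.ext
    funext z
    apply Subtype.ext
    change Y.map (m.left ≫ m'.left).op z.1 = Y.map m.left.op (Y.map m'.left.op z.1)
    rw [op_comp, Y.map_comp]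
    rfl

lemma pointed_ext' {P Q : Pointed.{u}} (h : P.X = Q.X) (h' : HEq P.point Q.point) : P = Q := by
  cases P; cases Q; cases h; cases h'; rfl

lemma pointed_eqToHom_toFun {P Q : Pointed.{u}} (h : P = Q) (a : P.X) :
    (eqToHom h).toFun a = cast (congrArg Pointed.X h) a := by subst h; rfl

lemma type_eqToHom_apply {A B : Type v} (h : A = B) (a : A) :
    (eqToHom h : A ⟶ B) a = cast h a := by subst h; rfl

lemma point_heq_of_eq {P Q : Pointed.{u}} (h : P = Q) : HEq P.point Q.point := by
  subst h; rfl

lemma congr_map_unop {D : Type*} [Category D] {F G : D ⥤ (Type u)ᵒᵖ} (h : F = G)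
    {d d' : D} (m : d ⟶ d') (z : (F.obj d').unop) :
    (F.map m).unop z =
      cast (congrArg Opposite.unop (Functor.congr_obj h d)).symm
        ((G.map m).unop (cast (congrArg Opposite.unop (Functor.congr_obj h d')) z)) := by
  subst h; rfl

lemma pointedOpFunctorExt {D : Type*} [Category D] {F G : D ⥤ Pointed.{u}ᵒᵖ}
    (h : F ⋙ (forget Pointed.{u}).op = G ⋙ (forget Pointed.{u}).op)
    (hpt : ∀ d, HEq (F.obj d).unop.point (G.obj d).unop.point) : F = G := by
  have hX : ∀ d, (F.obj d).unop.X = (G.obj d).unop.X := fun d =>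
    congrArg Opposite.unop (Functor.congr_obj h d)
  have hobj : ∀ d, F.obj d = G.obj d := fun d =>
    Opposite.unop_injective (pointed_ext' (hX d) (hpt d))
  refine CategoryTheory.Functor.ext hobj (fun d d' m => ?_)
  apply Quiver.Hom.unop_inj
  apply Pointed.Hom.ext
  funext z
  have key := congr_map_unop h m z
  simp only [unop_comp, eqToHom_unop, Pointed.Hom.comp_toFun', Function.comp_apply]
  rw [pointed_eqToHom_toFun, pointed_eqToHom_toFun]
  exact key
lemma fib_val_eq_of_heq {Y X : Cᵒᵖ ⥤ Type u} (f : Y ⟶ X) {d : C} {x x' : X.obj (op d)}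
    (h : x = x') {a : fib f x} {b : fib f x'} (hab : HEq a b) : a.1 = b.1 := by
  subst h; exact congrArg Subtype.val (eq_of_heq hab)

lemma fib_heq_of_val_eq {Y X : Cᵒᵖ ⥤ Type u} (f : Y ⟶ X) {d : C} {x x' : X.obj (op d)}
    (h : x = x') {a : fib f x} {b : fib f x'} (hv : a.1 = b.1) : HEq a b := by
  subst h; exact heq_of_eq (Subtype.ext hv)

/-- For any morphism of presheaves `f : Y ⟶ X` on a small category `C`
and every object `c`, the square of sets with top map `Y(c) → Fun(C/c, Set∙ᵒᵖ)`,
`y ↦ ((g : d ⟶ c) ↦ (f_d⁻¹{X(g)(f_c(y))}, Y(g)(y)))`, bottom map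
`X(c) → Fun(C/c, Setᵒᵖ)`, `x ↦ ((g : d ⟶ c) ↦ f_d⁻¹{X(g)(x)})`, left map `f_c`, and right
map post-composition with the (opposite of the) forgetful functor `Set∙ᵒᵖ ⥤ Setᵒᵖ`,
commutes and is a pullback of sets (in `Type (u+1)`, after lifting the small sets
`Y(c)` and `X(c)`). -/
theorem classifyDot_isPullback (C : Type u) [SmallCategory C]
    {Y X : Cᵒᵖ ⥤ Type u} (f : Y ⟶ X) (c : C) :
    IsPullback
      (show ULift.{u + 1} (Y.obj (op c)) ⟶ (Over c ⥤ Pointed.{u}ᵒᵖ) from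
        TypeCat.ofHom fun y => classifyDot f y.down)
      (show ULift.{u + 1} (Y.obj (op c)) ⟶ ULift.{u + 1} (X.obj (op c)) from
        TypeCat.ofHom fun y => ⟨f.app (op c) y.down⟩)
      (show (Over c ⥤ Pointed.{u}ᵒᵖ) ⟶ (Over c ⥤ (Type u)ᵒᵖ) from
        TypeCat.ofHom fun L => L ⋙ (forget Pointed.{u}).op)
      (show ULift.{u + 1} (X.obj (op c)) ⟶ (Over c ⥤ (Type u)ᵒᵖ) from
        TypeCat.ofHom fun x => classify f x.down) := by
  refine IsPullback.of_isLimit' ⟨rfl⟩ ?_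
  refine (PullbackCone.isLimitEquivBijective _).symm ?_
  constructor
  · intro a b hab
    have h1 : classifyDot f a.down = classifyDot f b.down :=
      congrArg (fun t => t.val.1) hab
    have h2 : f.app (op c) a.down = f.app (op c) b.down :=
      congrArg (fun t => t.val.2.down) hab
    have h3 := point_heq_of_eq
      (congrArg Opposite.unop (Functor.congr_obj h1 (Over.mk (𝟙 c))))
    have h4 : Y.map (𝟙 c).op a.down = Y.map (𝟙 c).op b.down :=
      fib_val_eq_of_heq f (congrArg (X.map (𝟙 c).op) h2) h3
    have h5 : a.down = b.down := by simpa using h4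
    cases a; cases b; cases h5; rfl
  · rintro ⟨⟨L, x⟩, hp⟩
    have hp' : L ⋙ (forget Pointed.{u}).op = classify f x.down := hp
    have hX0 : (L.obj (Over.mk (𝟙 c))).unop.X = fib f (X.map (𝟙 c).op x.down) :=
      congrArg Opposite.unop (Functor.congr_obj hp' (Over.mk (𝟙 c)))
    set y0 : fib f (X.map (𝟙 c).op x.down) :=
      cast hX0 (L.obj (Over.mk (𝟙 c))).unop.point with hy0def
    have hy0 : f.app (op c) y0.1 = x.down := by
      have := y0.2; simpa using this
    refine ⟨⟨y0.1⟩, Subtype.ext (Prod.ext ?_ ?_)⟩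
    · show classifyDot f y0.1 = L
      refine pointedOpFunctorExt ?_ ?_
      · rw [hp']; exact congrArg (classify f) hy0
      · intro g
        have keyv :
            (L.map (Over.homMk g.hom : g ⟶ Over.mk (𝟙 c))).unop.toFun
                ((L.obj (Over.mk (𝟙 c))).unop.point) =
              cast (congrArg Opposite.unop (Functor.congr_obj hp' g)).symm
                (((classify f x.down).map (Over.homMk g.hom : g ⟶ Over.mk (𝟙 c))).unop
                  (cast (congrArg Opposite.unop
                    (Functor.congr_obj hp' (Over.mk (𝟙 c))))
                    ((L.obj (Over.mk (𝟙 c))).unop.point))) :=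
          congr_map_unop hp' _ _
        rw [(L.map (Over.homMk g.hom : g ⟶ Over.mk (𝟙 c))).unop.map_point] at keyv
        rw [keyv]
        refine HEq.trans ?_ (cast_heq _ _).symm
        exact fib_heq_of_val_eq f (congrArg (X.map g.hom.op) hy0) rfl
    · show ULift.up (f.app (op c) y0.1) = x
      rw [hy0]

end HS
end

section
/- Let F : C ⥤ D be a functor between small categories and c an object of C. Given any functor Q : D/F(c) ⥤ Setᵒᵖ and any functor L : C/c ⥤ Set∙ᵒᵖ such that U ∘ L = Q ∘ (F/c), where U : Set∙ᵒᵖ → Setᵒᵖ is the opposite of the forgetful functor, there exists a unique functor M : D/F(c) ⥤ Set∙ᵒᵖ with U ∘ M = Q and M ∘ (F/c) = L. (Equivalently: for every object c, the square of sets with horizontal maps given by precomposition with F/c from Fun(D/F(c), Set∙ᵒᵖ) to Fun(C/c, Set∙ᵒᵖ) and from Fun(D/F(c), Setᵒᵖ) to Fun(C/c, Setᵒᵖ), and vertical maps given by postcomposition with U, is a pullback; hence the base-change comparison square F*𝒱_D → 𝒱_C over F*𝒱̇_D → 𝒱̇_C is a pullback of presheaves on C.) -/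
open CategoryTheory Limits Opposite

universe u

section Aux

lemma pointed_ext' {A B : Pointed.{u}} (h : A.X = B.X) (hp : HEq A.point B.point) : A = B := by
  cases A; cases B; cases h; cases hp; rfl

lemma functor_ext_of_faithful {A B B' : Type*} [Category A] [Category B] [Category B']
    (U : B ⥤ B') [U.Faithful] (M M' : A ⥤ B) (hobj : ∀ X, M.obj X = M'.obj X)
    (hmap : M ⋙ U = M' ⋙ U) : M = M' := by
  refine CategoryTheory.Functor.ext hobj (fun X Y f => ?_)
  apply U.map_injective
  rw [Functor.map_comp, Functor.map_comp, eqToHom_map, eqToHom_map]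
  exact Functor.congr_hom hmap f

lemma type_eqToHom_apply {A B : Type u} (h : A = B) (a : A) :
    (eqToHom h : A ⟶ B) a = cast h a := by subst h; rfl

variable {D : Type u} [SmallCategory D]

/-- the terminal map in `Over d` -/
def tm {d : D} (X : Over d) : X ⟶ Over.mk (𝟙 d) := Over.homMk X.hom

lemma tm_uniq {d : D} {X : Over d} (f : X ⟶ Over.mk (𝟙 d)) : f = tm X :=
  Over.mkIdTerminal.hom_ext _ _

/-- the canonical pointed lift of `Q` given a point over the terminal object -/
def liftFun {d : D} (Q : Over d ⥤ (Type u)ᵒᵖ) (p0 : (Q.obj (Over.mk (𝟙 d))).unop) :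
    Over d ⥤ Pointed.{u}ᵒᵖ where
  obj X := op ⟨(Q.obj X).unop, (Q.map (tm X)).unop p0⟩
  map {X Y} f := Quiver.Hom.op
    { toFun := (Q.map f).unop
      map_point := by
        rw [← tm_uniq (f ≫ tm Y), Q.map_comp]
        rfl }
  map_id X := by
    apply Quiver.Hom.unop_inj
    apply Pointed.Hom.ext
    simp; rfl
  map_comp f g := by
    apply Quiver.Hom.unop_inj
    apply Pointed.Hom.ext
    simp; rfl

lemma liftFun_forget {d : D} (Q : Over d ⥤ (Type u)ᵒᵖ) (p0 : (Q.obj (Over.mk (𝟙 d))).unop) :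
    liftFun Q p0 ⋙ (forget Pointed.{u}).op = Q := rfl

end Aux

/-- Let `F : C ⥤ D` be a functor between small categories and `c : C`.
Given `Q : D/F(c) ⥤ Setᵒᵖ` and `L : C/c ⥤ Set∙ᵒᵖ` with `U ∘ L = Q ∘ (F/c)`, where
`U : Set∙ᵒᵖ ⥤ Setᵒᵖ` is the opposite of the forgetful functor, there is a unique
`M : D/F(c) ⥤ Set∙ᵒᵖ` with `U ∘ M = Q` and `M ∘ (F/c) = L`.  (Hence the base-change
comparison square of the universes `𝒱` is a pullback of presheaves.) -/
theorem unique_pointed_lift {C : Type u} {D : Type u} [SmallCategory C] [SmallCategory D]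
    (F : C ⥤ D) (c : C)
    (Q : Over (F.obj c) ⥤ (Type u)ᵒᵖ) (L : Over c ⥤ Pointed.{u}ᵒᵖ)
    (hL : L ⋙ (forget Pointed.{u}).op = (Over.post F : Over c ⥤ Over (F.obj c)) ⋙ Q) :
    ∃! M : Over (F.obj c) ⥤ Pointed.{u}ᵒᵖ,
      M ⋙ (forget Pointed.{u}).op = Q ∧ (Over.post F : Over c ⥤ Over (F.obj c)) ⋙ M = L := by
  have h0 : (Over.post F).obj (Over.mk (𝟙 c)) = Over.mk (𝟙 (F.obj c)) := by
    simp [Over.post]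
  have e : ∀ X : Over c, (L.obj X).unop.X = (Q.obj ((Over.post F).obj X)).unop :=
    fun X => congrArg Opposite.unop (Functor.congr_obj hL X)
  have eT : (L.obj (Over.mk (𝟙 c))).unop.X = (Q.obj (Over.mk (𝟙 (F.obj c)))).unop := by
    rw [e (Over.mk (𝟙 c)), h0]
  set p0 : (Q.obj (Over.mk (𝟙 (F.obj c)))).unop :=
    cast eT (L.obj (Over.mk (𝟙 c))).unop.point with hp0
  have hpt : ∀ X : Over c,
      HEq ((Q.map (tm ((Over.post F).obj X))).unop p0) (L.obj X).unop.point := by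
    intro X
    have key := ((L.map (tm X)).unop).map_point
    have hc := Functor.congr_hom hL (tm X)
    have hfun : (L.map (tm X)).unop.toFun =
        (eqToHom (Functor.congr_obj hL X) ≫ Q.map ((Over.post F).map (tm X)) ≫
          eqToHom (Functor.congr_obj hL (Over.mk (𝟙 c))).symm).unop :=
      by have h := congrArg Quiver.Hom.unop hc; exact congrArg DFunLike.coe (congrArg ConcreteCategory.hom h)
    have htm : tm ((Over.post F).obj X) = (Over.post F).map (tm X) ≫ eqToHom h0 :=
      (tm_uniq _).symm
    refine heq_of_cast_eq (e X).symm ?_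
    rw [← key, hfun, htm]
    simp only [Q.map_comp, unop_comp, eqToHom_map, eqToHom_unop, types_comp_apply,
      type_eqToHom_apply, hp0, cast_cast]
  refine ⟨liftFun Q p0, ⟨liftFun_forget Q p0, ?_⟩, ?_⟩
  · refine functor_ext_of_faithful ((forget Pointed.{u}).op) _ _ (fun X => ?_) ?_
    · exact Opposite.unop_injective (pointed_ext' (e X).symm (hpt X))
    · show (Over.post F ⋙ liftFun Q p0) ⋙ _ = L ⋙ _
      rw [Functor.assoc, liftFun_forget]
      exact hL.symm
  · rintro M ⟨hM1, hM2⟩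
    have hMT : M.obj (Over.mk (𝟙 (F.obj c))) = L.obj (Over.mk (𝟙 c)) := by
      rw [← h0]
      exact Functor.congr_obj hM2 (Over.mk (𝟙 c))
    have hpt2 : HEq (M.obj (Over.mk (𝟙 (F.obj c)))).unop.point
        (L.obj (Over.mk (𝟙 c))).unop.point :=
      congr_arg_heq (fun P => (Opposite.unop P).point) hMT
    have e2 : (Q.obj (Over.mk (𝟙 (F.obj c)))).unop
        = (M.obj (Over.mk (𝟙 (F.obj c)))).unop.X :=
      (congrArg Opposite.unop (Functor.congr_obj hM1 (Over.mk (𝟙 (F.obj c))))).symm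
    have hptTD : (M.obj (Over.mk (𝟙 (F.obj c)))).unop.point = cast e2 p0 := by
      symm
      rw [cast_eq_iff_heq, hp0]
      exact (cast_heq eT _).trans hpt2.symm
    refine functor_ext_of_faithful ((forget Pointed.{u}).op) _ _ (fun X => ?_) ?_
    · apply Opposite.unop_injective
      refine pointed_ext' (congrArg Opposite.unop (Functor.congr_obj hM1 X)) ?_
      -- HEq (M.obj X).unop.point ((Q.map (tm X)).unop p0)
      have keyM := ((M.map (tm X)).unop).map_point
      have hfunM : (M.map (tm X)).unop.toFun =
          (eqToHom (Functor.congr_obj hM1 X) ≫ Q.map (tm X) ≫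
            eqToHom (Functor.congr_obj hM1 (Over.mk (𝟙 (F.obj c)))).symm).unop :=
        by have h := congrArg Quiver.Hom.unop (Functor.congr_hom hM1 (tm X)); exact congrArg DFunLike.coe (congrArg ConcreteCategory.hom h)
      refine heq_of_cast_eq (congrArg Opposite.unop (Functor.congr_obj hM1 X)) ?_
      rw [← keyM, hfunM, hptTD]
      simp only [unop_comp, eqToHom_unop, types_comp_apply, type_eqToHom_apply, cast_cast,
        cast_eq]
      apply eq_of_heq
      refine (cast_heq _ _).trans ((cast_heq _ _).trans ?_)
      rfl
    · rw [hM1, liftFun_forget]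
end

section
/- Let C be a small category, c an object of C, and κ a cardinal (e.g., strongly inaccessible). There is a bijection between the set of functors C/c ⥤ Set∙,κᵒᵖ and the set of pairs (A, a) where A : (C/c)ᵒᵖ ⥤ Set_κ is a presheaf on the slice category C/c and a ∈ A(1_c) is an element of the value of A at the identity of c. (This identifies the nerve universe 𝒱̇_κ(c) = Fun(C/c, Set∙,κᵒᵖ) with the Hofmann–Streicher universe's total presheaf E(c) = Σ_{A ∈ U(c)} A(1_c).) -/
open CategoryTheory Opposite Limits

universe u

namespace HS

variable {C : Type u} [SmallCategory C]

/-- The full subcategory `Set_α` of `Set` on the `α`-small sets (cardinality `< α`). -/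
def SmallSet (α : Cardinal.{u}) : Type (u + 1) :=
  ObjectProperty.FullSubcategory (fun S : Type u => Cardinal.mk S < α)

instance (α : Cardinal.{u}) : Category.{u} (SmallSet α) :=
  ObjectProperty.FullSubcategory.category _

/-- The category `Set∙,α` of `α`-small pointed sets. -/
def SmallPointed (α : Cardinal.{u}) : Type (u + 1) :=
  ObjectProperty.FullSubcategory (fun P : Pointed.{u} => Cardinal.mk P.X < α)

instance (α : Cardinal.{u}) : Category.{u} (SmallPointed α) :=
  ObjectProperty.FullSubcategory.category _

/-- For a small category `C`, an object `c` of `C`, and a cardinal `κ`,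
there is a bijection between functors `C/c ⥤ Set∙,κᵒᵖ` and pairs `(A, a)` of a presheaf
`A : (C/c)ᵒᵖ ⥤ Set_κ` on the slice category together with an element `a ∈ A(1_c)` of its
value at the identity of `c` (the terminal object of `C/c`).  This identifies the nerve
universe `𝒱̇_κ(c)` with the total presheaf `E(c) = Σ_{A ∈ U(c)} A(1_c)` of the
Hofmann–Streicher universe. -/
def fgt (κ : Cardinal.{u}) : SmallPointed κ ⥤ SmallSet κ where
  obj P := ⟨P.obj.X, P.property⟩
  map f := ⟨TypeCat.ofHom f.hom.toFun⟩

def tmap {c : C} (x : Over c) : x ⟶ Over.mk (𝟙 c) := Over.homMk x.hom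

lemma tmap_unique {c : C} {x : Over c} (f : x ⟶ Over.mk (𝟙 c)) : f = tmap x :=
  Over.mkIdTerminal.hom_ext f (tmap x)

variable {κ : Cardinal.{u}} {c : C}

def Phi (F : Over c ⥤ (SmallPointed κ)ᵒᵖ) :
    Σ A : (Over c)ᵒᵖ ⥤ SmallSet κ, (A.obj (op (Over.mk (𝟙 c)))).obj :=
  ⟨F.op ⋙ (unopUnop (SmallPointed κ)) ⋙ fgt κ, (F.obj (Over.mk (𝟙 c))).unop.obj.point⟩

def Psi (P : Σ A : (Over c)ᵒᵖ ⥤ SmallSet κ, (A.obj (op (Over.mk (𝟙 c)))).obj) :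
    Over c ⥤ (SmallPointed κ)ᵒᵖ where
  obj x := op ⟨⟨(P.1.obj (op x)).obj, (P.1.map (tmap x).op).hom P.2⟩, (P.1.obj (op x)).property⟩
  map {x y} f := Quiver.Hom.op
    ⟨(⟨(P.1.map f.op).hom, by
      show (P.1.map (tmap y).op ≫ P.1.map f.op).hom P.2 = (P.1.map (tmap x).op).hom P.2
      rw [← P.1.map_comp, ← op_comp, tmap_unique (f ≫ tmap y)]⟩ :
      Pointed.Hom _ _)⟩
  map_id x := by
    apply Quiver.Hom.unop_inj
    apply InducedCategory.hom_ext
    apply Pointed.Hom.ext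
    show ⇑(ConcreteCategory.hom (P.1.map (𝟙 (op x))).hom) = _
    rw [P.1.map_id]; rfl
  map_comp {x y z} f g := by
    apply Quiver.Hom.unop_inj
    apply InducedCategory.hom_ext
    apply Pointed.Hom.ext
    show ⇑(ConcreteCategory.hom (P.1.map ((f ≫ g).op)).hom) = _
    rw [op_comp, P.1.map_comp]; rfl

lemma comp_eqToHom_toFun {P Q R S : SmallPointed κ} (h1 : P = Q) (g : Q ⟶ R) (h2 : R = S)
    (u : P.obj.X) :
    ((eqToHom h1 ≫ g) ≫ eqToHom h2).hom.toFun u =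
      cast (congrArg (fun T : SmallPointed κ => T.obj.X) h2)
        (g.hom.toFun (cast (congrArg (fun T : SmallPointed κ => T.obj.X) h1) u)) := by
  subst h1; subst h2; rfl

lemma toFun_eqToHom {P Q : SmallPointed κ} (h : P = Q) :
    (eqToHom h).hom.toFun =
      cast (congrArg (fun R : SmallPointed κ => R.obj.X) h) := by
  subst h; rfl

theorem pointed_functors_equiv_pointed_presheaves' (c : C) (κ : Cardinal.{u}) :
    Nonempty ((Over c ⥤ (SmallPointed κ)ᵒᵖ) ≃
      Σ A : (Over c)ᵒᵖ ⥤ SmallSet κ, (A.obj (op (Over.mk (𝟙 c)))).obj) := by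
  refine ⟨⟨Phi, Psi, ?_, ?_⟩⟩
  · intro F
    have hobj : ∀ x : Over c, (Psi (Phi F)).obj x = F.obj x := by
      intro x
      show op _ = _
      have hpt : ((Phi F).1.map (tmap x).op).hom (Phi F).2 = (F.obj x).unop.obj.point :=
        (F.map (tmap x)).unop.hom.map_point
      rw [show (⟨⟨((Phi F).1.obj (op x)).obj, ((Phi F).1.map (tmap x).op).hom (Phi F).2⟩,
          ((Phi F).1.obj (op x)).property⟩ : SmallPointed κ)
        = ⟨⟨(F.obj x).unop.obj.X, (F.obj x).unop.obj.point⟩, (F.obj x).unop.property⟩ from by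
          rw [hpt]; rfl]
      rfl
    refine CategoryTheory.Functor.ext hobj ?_
    intro x y f
    apply Quiver.Hom.unop_inj
    apply InducedCategory.hom_ext
    apply Pointed.Hom.ext
    funext u
    simp only [unop_comp, eqToHom_unop]
    rw [comp_eqToHom_toFun]
    exact eq_of_heq
      (((cast_heq _ _).trans
        (heq_of_eq (congrArg (F.map f).unop.hom.toFun (eq_of_heq (cast_heq _ u))))).symm)
  · intro P
    have h1 : tmap (Over.mk (𝟙 c)) = 𝟙 (Over.mk (𝟙 c)) := (tmap_unique (𝟙 _)).symm
    have h2 : Phi (Psi P) = ⟨P.1, (P.1.map (tmap (Over.mk (𝟙 c))).op).hom P.2⟩ := rfl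
    rw [h2, h1, op_id, P.1.map_id]; rfl


/-- main -/
theorem pointed_functors_equiv_pointed_presheaves (C : Type u) [SmallCategory C] (c : C)
    (κ : Cardinal.{u}) :
    Nonempty ((Over c ⥤ (SmallPointed κ)ᵒᵖ) ≃
      Σ A : (Over c)ᵒᵖ ⥤ SmallSet κ, (A.obj (op (Over.mk (𝟙 c)))).obj) := by
  exact pointed_functors_equiv_pointed_presheaves' c κ

end HS
end
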